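/- Let R₁, R₂, R₃ be elements of an associative ring satisfying [R₁, R₂] = -R₃, [R₁, R₃] = 0, and [R₂, R₃] = 0. Then for positive integers i, j, [R₁^i, R₂^j] = Σ_{k=1}^{min(i,j)} (-1)^k · k! · C(i,k) · C(j,k) · R₃^k R₂^{j-k} R₁^{i-k}. -/

import Mathlib

theorem aux1 {R : Type*} [Ring R] (R₁ R₂ R₃ : R)
    (hm : R₁ * R₂ = R₂ * R₁ - R₃) (c23 : Commute R₂ R₃) :
    ∀ m : ℕ, R₁ * R₂ ^ m = R₂ ^ m * R₁ - (m : ℤ) • (R₃ * R₂ ^ (m - 1)) := by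
  intro m
  induction m with
  | zero => simp
  | succ n ih =>
    calc R₁ * R₂ ^ (n + 1) = (R₁ * R₂) * R₂ ^ n := by
          rw [pow_succ' R₂ n, ← mul_assoc]
      _ = R₂ * (R₁ * R₂ ^ n) - R₃ * R₂ ^ n := by rw [hm]; noncomm_ring
      _ = R₂ * (R₂ ^ n * R₁ - (n : ℤ) • (R₃ * R₂ ^ (n - 1))) - R₃ * R₂ ^ n := by rw [ih]
      _ = R₂ ^ (n + 1) * R₁ - ((n + 1 : ℕ) : ℤ) • (R₃ * R₂ ^ n) := by
          cases n with
          | zero => simp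
          | succ s =>
            have h1 : R₂ * (R₃ * R₂ ^ s) = R₃ * R₂ ^ (s + 1) := by
              rw [← mul_assoc, c23.eq, mul_assoc, ← pow_succ']
            rw [mul_sub, mul_smul_comm, Nat.succ_sub_one, h1, ← mul_assoc, ← pow_succ']
            push_cast
            module

theorem coeff_id (i j k : ℕ) :
    ((-1 : ℤ) ^ (k+1) * (k+1).factorial * (i+1).choose (k+1) * j.choose (k+1)) =
      ((-1 : ℤ) ^ (k+1) * (k+1).factorial * i.choose (k+1) * j.choose (k+1))
      - ((-1 : ℤ) ^ k * k.factorial * i.choose k * j.choose k) * ((j - k : ℕ) : ℤ) := by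
  have h1 : (((i+1).choose (k+1) : ℤ)) = i.choose k + i.choose (k+1) := by
    exact_mod_cast congrArg (Nat.cast (R := ℤ)) (Nat.choose_succ_succ i k)
  have h2 : ((j.choose (k+1) : ℤ)) * (k+1) = j.choose k * ((j - k : ℕ) : ℤ) := by
    exact_mod_cast Nat.choose_succ_right_eq j k
  have h3 : ((k+1).factorial : ℤ) = (k+1) * k.factorial := by
    exact_mod_cast Nat.factorial_succ k
  rw [h1, h3]
  linear_combination ((-1:ℤ)^(k+1) * k.factorial * i.choose k) * h2

theorem main_lemma {R : Type*} [Ring R] (R₁ R₂ R₃ : R)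
    (hm : R₁ * R₂ = R₂ * R₁ - R₃) (c13 : Commute R₁ R₃) (c23 : Commute R₂ R₃)
    (j : ℕ) :
    ∀ i : ℕ, R₁ ^ i * R₂ ^ j =
      ∑ k ∈ Finset.range (i+1),
        ((-1 : ℤ) ^ k * k.factorial * i.choose k * j.choose k) •
          (R₃ ^ k * R₂ ^ (j - k) * R₁ ^ (i - k)) := by
  intro i
  induction i with
  | zero => simp
  | succ i ih =>
    have key : ∀ k ∈ Finset.range (i+1),
        R₁ * (R₃ ^ k * R₂ ^ (j - k) * R₁ ^ (i - k)) =
          R₃ ^ k * R₂ ^ (j - k) * R₁ ^ (i + 1 - k)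
          - ((j - k : ℕ) : ℤ) • (R₃ ^ (k+1) * R₂ ^ (j - (k+1)) * R₁ ^ (i + 1 - (k+1))) := by
      intro k hk
      have hki : k ≤ i := Nat.lt_succ_iff.mp (Finset.mem_range.mp hk)
      have e2 : i - k + 1 = i + 1 - k := by omega
      have e3 : j - k - 1 = j - (k + 1) := by omega
      have e4 : i - k = i + 1 - (k + 1) := by omega
      calc R₁ * (R₃ ^ k * R₂ ^ (j - k) * R₁ ^ (i - k))
          = R₃ ^ k * ((R₁ * R₂ ^ (j - k)) * R₁ ^ (i - k)) := by
            rw [← mul_assoc, ← mul_assoc, (c13.pow_right k).eq, mul_assoc, mul_assoc,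
              ← mul_assoc R₁]
        _ = R₃ ^ k * (((R₂ ^ (j - k)) * R₁ - ((j - k : ℕ) : ℤ) • (R₃ * R₂ ^ (j - k - 1)))
              * R₁ ^ (i - k)) := by rw [aux1 R₁ R₂ R₃ hm c23 (j - k)]
        _ = R₃ ^ k * (R₂ ^ (j - k) * (R₁ * R₁ ^ (i - k)))
            - ((j - k : ℕ) : ℤ) • (R₃ ^ k * (R₃ * (R₂ ^ (j - k - 1) * R₁ ^ (i - k)))) := by
            rw [sub_mul, smul_mul_assoc, mul_sub, mul_smul_comm]
            simp only [mul_assoc]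
        _ = R₃ ^ k * R₂ ^ (j - k) * R₁ ^ (i + 1 - k)
            - ((j - k : ℕ) : ℤ) • (R₃ ^ (k+1) * R₂ ^ (j - (k+1)) * R₁ ^ (i + 1 - (k+1))) := by
            rw [← pow_succ' R₁ (i - k), e2, e3, e4, pow_succ R₃ k]
            simp only [mul_assoc]
    calc R₁ ^ (i+1) * R₂ ^ j = R₁ * (R₁ ^ i * R₂ ^ j) := by
          rw [pow_succ' R₁ i, mul_assoc]
      _ = ∑ k ∈ Finset.range (i+1),
            ((-1 : ℤ) ^ k * k.factorial * i.choose k * j.choose k) •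
              (R₁ * (R₃ ^ k * R₂ ^ (j - k) * R₁ ^ (i - k))) := by
          rw [ih, Finset.mul_sum]
          exact Finset.sum_congr rfl fun k _ => (mul_smul_comm _ _ _)
      _ = ∑ k ∈ Finset.range (i+1),
            (((-1 : ℤ) ^ k * k.factorial * i.choose k * j.choose k) •
              (R₃ ^ k * R₂ ^ (j - k) * R₁ ^ (i + 1 - k))
            - (((-1 : ℤ) ^ k * k.factorial * i.choose k * j.choose k) * ((j - k : ℕ) : ℤ)) •
              (R₃ ^ (k+1) * R₂ ^ (j - (k+1)) * R₁ ^ (i + 1 - (k+1)))) := by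
          refine Finset.sum_congr rfl fun k hk => ?_
          rw [key k hk, smul_sub, smul_smul]
      _ = ∑ k ∈ Finset.range (i+1),
            ((-1 : ℤ) ^ k * k.factorial * i.choose k * j.choose k) •
              (R₃ ^ k * R₂ ^ (j - k) * R₁ ^ (i + 1 - k))
          - ∑ k ∈ Finset.range (i+1),
            (((-1 : ℤ) ^ k * k.factorial * i.choose k * j.choose k) * ((j - k : ℕ) : ℤ)) •
              (R₃ ^ (k+1) * R₂ ^ (j - (k+1)) * R₁ ^ (i + 1 - (k+1))) :=
          Finset.sum_sub_distrib _ _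
      _ = ∑ k ∈ Finset.range (i+1+1),
            ((-1 : ℤ) ^ k * k.factorial * (i+1).choose k * j.choose k) •
              (R₃ ^ k * R₂ ^ (j - k) * R₁ ^ (i + 1 - k)) := by
          have hext : (∑ k ∈ Finset.range (i+1),
              ((-1 : ℤ) ^ k * k.factorial * i.choose k * j.choose k) •
                (R₃ ^ k * R₂ ^ (j - k) * R₁ ^ (i + 1 - k)))
              = ∑ k ∈ Finset.range (i+2),
              ((-1 : ℤ) ^ k * k.factorial * i.choose k * j.choose k) •
                (R₃ ^ k * R₂ ^ (j - k) * R₁ ^ (i + 1 - k)) := by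
            rw [Finset.sum_range_succ _ (i+1)]
            simp [Nat.choose_succ_self]
          rw [hext]
          rw [show i+1+1 = i+2 from rfl]
          rw [Finset.sum_range_succ' (fun k => ((-1 : ℤ) ^ k * k.factorial * i.choose k * j.choose k) •
                (R₃ ^ k * R₂ ^ (j - k) * R₁ ^ (i + 1 - k))) (i+1)]
          rw [Finset.sum_range_succ' (fun k => ((-1 : ℤ) ^ k * k.factorial * (i+1).choose k * j.choose k) •
                (R₃ ^ k * R₂ ^ (j - k) * R₁ ^ (i + 1 - k))) (i+1)]
          rw [add_sub_right_comm, ← Finset.sum_sub_distrib]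
          congr 1
          · refine Finset.sum_congr rfl fun k hk => ?_
            rw [← sub_smul, ← coeff_id]
          · norm_num

theorem stmt_5 {R : Type*} [Ring R] (R₁ R₂ R₃ : R)
    (h12 : R₁ * R₂ - R₂ * R₁ = -R₃)
    (h13 : R₁ * R₃ - R₃ * R₁ = 0)
    (h23 : R₂ * R₃ - R₃ * R₂ = 0)
    (i j : ℕ) (hi : 0 < i) (hj : 0 < j) :
    R₁ ^ i * R₂ ^ j - R₂ ^ j * R₁ ^ i =
      ∑ k ∈ Finset.Icc 1 (min i j),
        ((-1 : ℤ) ^ k * k.factorial * i.choose k * j.choose k) •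
          (R₃ ^ k * R₂ ^ (j - k) * R₁ ^ (i - k)) := by
  have c13 : Commute R₁ R₃ := sub_eq_zero.mp h13
  have c23 : Commute R₂ R₃ := sub_eq_zero.mp h23
  have hm : R₁ * R₂ = R₂ * R₁ - R₃ := by
    rw [sub_eq_iff_eq_add.mp h12]; abel
  have hmain := main_lemma R₁ R₂ R₃ hm c13 c23 j i
  rw [Finset.sum_range_succ' _ i] at hmain
  have h0 : ((-1 : ℤ) ^ 0 * Nat.factorial 0 * i.choose 0 * j.choose 0) •
      (R₃ ^ 0 * R₂ ^ (j - 0) * R₁ ^ (i - 0)) = R₂ ^ j * R₁ ^ i := by simp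
  rw [h0] at hmain
  have hL : R₁ ^ i * R₂ ^ j - R₂ ^ j * R₁ ^ i =
      ∑ k ∈ Finset.range i,
        ((-1 : ℤ) ^ (k+1) * (k+1).factorial * i.choose (k+1) * j.choose (k+1)) •
          (R₃ ^ (k+1) * R₂ ^ (j - (k+1)) * R₁ ^ (i - (k+1))) := by
    rw [hmain]; exact add_sub_cancel_right _ _
  rw [hL]
  have hsub : (∑ k ∈ Finset.Icc 1 (min i j),
      ((-1 : ℤ) ^ k * k.factorial * i.choose k * j.choose k) •
        (R₃ ^ k * R₂ ^ (j - k) * R₁ ^ (i - k)))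
      = ∑ k ∈ Finset.Icc 1 i,
      ((-1 : ℤ) ^ k * k.factorial * i.choose k * j.choose k) •
        (R₃ ^ k * R₂ ^ (j - k) * R₁ ^ (i - k)) := by
    refine Finset.sum_subset ?_ ?_
    · apply Finset.Icc_subset_Icc_right (Nat.min_le_left i j)
    · intro x hx hx'
      simp only [Finset.mem_Icc] at hx hx'
      have hjx : j < x := by omega
      rw [Nat.choose_eq_zero_of_lt hjx]
      simp
  rw [hsub, ← Finset.Ico_add_one_right_eq_Icc, Finset.sum_Ico_eq_sum_range]
  simp only [Nat.add_sub_cancel]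
  exact Finset.sum_congr rfl fun k _ => by rw [add_comm 1 k]
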